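/- Let i, j, k ∈ {1,...,n} with λ_i < λ_k < λ_j, and let 0 ≤ s < λ_i and 0 ≤ t < λ_k. Then in g^f, [ζ_i^{k,s}, ζ_k^{j,t}] = −ζ_i^{j, s + t − (λ_k − 1)}. In particular, taking t = λ_k − 1, every ζ_i^{j,s} with λ_i < λ_k < λ_j is generated by ζ's between 'adjacent' block sizes. -/

import Mathlib

open Matrix

/-- Boxes of the pyramid of the partition `lam`: in row `i` there are `lam i` boxes. -/
abbrev Box {n : ℕ} (lam : Fin n → ℕ) := Σ i : Fin n, Fin (lam i)

/-- `eMat a b` is the matrix of the elementary operator `e_a^b` sending the basis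
vector indexed by `a` to the one indexed by `b` (so `e_{i,s}^{j,t} = eMat ⟨i,s⟩ ⟨j,t⟩`,
`e_{i,s}^{j,t} f^p w_k = δ_{ik} δ_{sp} f^t w_j`). -/
noncomputable def eMat {n : ℕ} {lam : Fin n → ℕ} (a b : Box lam) :
    Matrix (Box lam) (Box lam) ℂ :=
  Matrix.single b a 1

/-- The sign `η_{i ≤ i'}(s)`: equal to `(−1)^s` if `i ≤ i'` and to `ε(−1)^{s'}`
(`s' = λ_i − 1 − s`) if `i > i'`. -/
noncomputable def eta {n : ℕ} (lam : Fin n → ℕ) (pr : Fin n → Fin n) (ε : ℂ)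
    (i : Fin n) (s : ℕ) : ℂ :=
  if i ≤ pr i then (-1 : ℂ) ^ s else ε * (-1 : ℂ) ^ (lam i - 1 - s)

/-- The Gram matrix `J` of the form, characterized by
`J f^{s'} w_{i'} = η_{i≤i'}(s) f^s w_i`; here `π : Box lam ≃ Box lam` is the involution
`⟨i,s⟩ ↦ ⟨i', s'⟩` of boxes. -/
noncomputable def Jmat {n : ℕ} {lam : Fin n → ℕ} (pr : Fin n → Fin n) (ε : ℂ)
    (π : Box lam ≃ Box lam) : Matrix (Box lam) (Box lam) ℂ :=
  ∑ a : Box lam, eta lam pr ε a.1 (a.2 : ℕ) • Matrix.single a (π a) 1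

/-- The involution `σ(X) = −J⁻¹ Xᵀ J` of `gl(V)`; its fixed algebra is `so(V)` (`ε = 1`)
or `sp(V)` (`ε = −1`). -/
noncomputable def sigmaM {n : ℕ} {lam : Fin n → ℕ} (pr : Fin n → Fin n) (ε : ℂ)
    (π : Box lam ≃ Box lam) (X : Matrix (Box lam) (Box lam) ℂ) :
    Matrix (Box lam) (Box lam) ℂ :=
  -((Jmat pr ε π)⁻¹ * Xᵀ * (Jmat pr ε π))

/-- The elements `f_{i,s}^{j,t} = e_{i,s}^{j,t} + σ(e_{i,s}^{j,t})` of the classical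
Lie algebra, indexed by boxes `a = ⟨i,s⟩`, `b = ⟨j,t⟩`. -/
noncomputable def fEl {n : ℕ} {lam : Fin n → ℕ} (pr : Fin n → Fin n) (ε : ℂ)
    (π : Box lam ≃ Box lam) (a b : Box lam) : Matrix (Box lam) (Box lam) ℂ :=
  eMat a b + sigmaM pr ε π (eMat a b)

/-- `ζ_i^{j,t} = Σ_{s=0}^t f_{i,s}^{j,s+t'}` with `t' = λ_j − 1 − t`, allowing an
integer parameter `t` (terms with out-of-range indices vanish, and `ζ_i^{j,t} = 0`
for `t < 0`). -/
noncomputable def zetaZ {n : ℕ} {lam : Fin n → ℕ} (pr : Fin n → Fin n) (ε : ℂ)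
    (π : Box lam ≃ Box lam) (i j : Fin n) (t : ℤ) : Matrix (Box lam) (Box lam) ℂ :=
  ∑ a : Box lam, ∑ b : Box lam,
    if a.1 = i ∧ b.1 = j ∧ ((a.2 : ℕ) : ℤ) ≤ t ∧
        ((b.2 : ℕ) : ℤ) = ((a.2 : ℕ) : ℤ) + ((lam j : ℤ) - 1 - t) then
      fEl pr ε π a b else 0

section Aux

variable {n : ℕ} {lam : Fin n → ℕ}

lemma box_ext {a b : Box lam} (h1 : a.1 = b.1) (h2 : (a.2 : ℕ) = (b.2 : ℕ)) : a = b := by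
  obtain ⟨x, u⟩ := a
  obtain ⟨y, v⟩ := b
  dsimp at h1 h2
  subst h1
  exact congrArg (Sigma.mk x) (Fin.ext h2)

variable (pr : Fin n → Fin n) (ε : ℂ) (π : Box lam ≃ Box lam)

/-- `η` as a function of a box. -/
noncomputable def et (lam : Fin n → ℕ) (pr : Fin n → Fin n) (ε : ℂ) (a : Box lam) : ℂ :=
  eta lam pr ε a.1 (a.2 : ℕ)

lemma et_def (a : Box lam) : eta lam pr ε a.1 (a.2 : ℕ) = et lam pr ε a := rfl

variable (hpr : ∀ i, pr (pr i) = i) (hlampr : ∀ i, lam (pr i) = lam i)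
  (hπ1 : ∀ a : Box lam, (π a).1 = pr a.1)
  (hπ2 : ∀ a : Box lam, ((π a).2 : ℕ) = lam a.1 - 1 - (a.2 : ℕ))

include hpr hlampr hπ1 hπ2 in
lemma pi_invol : ∀ a : Box lam, π (π a) = a := by
  intro a
  refine box_ext (by rw [hπ1, hπ1, hpr]) ?_
  rw [hπ2, hπ2, hπ1, hlampr]
  have := a.2.isLt
  omega

variable (hpos : ∀ i, 0 < lam i) (hε : ε = 1 ∨ ε = -1)
  (hfix : ∀ i, pr i = i ↔ ε * (-1 : ℂ) ^ (lam i) = -1)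

include hε in
lemma eps_sq : ε * ε = 1 := by rcases hε with rfl | rfl <;> norm_num

include hpr hlampr hπ1 hπ2 hpos hε hfix in
lemma et_pi (a : Box lam) : et lam pr ε a * et lam pr ε (π a) = ε := by
  obtain ⟨x, u⟩ := a
  have h1 : (π ⟨x, u⟩).1 = pr x := hπ1 _
  have h2 : ((π ⟨x, u⟩).2 : ℕ) = lam x - 1 - (u : ℕ) := hπ2 _
  have hu := u.isLt
  unfold et eta
  rw [h2, h1]
  rw [hpr x, hlampr x]
  dsimp only
  rcases lt_trichotomy x (pr x) with h | h | h
  · rw [if_pos h.le, if_neg (not_le.mpr h)]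
    have h3 : lam x - 1 - (lam x - 1 - (u : ℕ)) = (u : ℕ) := by omega
    rw [h3]
    have hsq : (-1 : ℂ) ^ (u : ℕ) * (-1 : ℂ) ^ (u : ℕ) = 1 := by
      rw [← mul_pow]; norm_num
    linear_combination ε * hsq
  · rw [if_pos h.le, if_pos h.ge]
    rw [← pow_add]
    have h3 : (u : ℕ) + (lam x - 1 - (u : ℕ)) = lam x - 1 := by omega
    rw [h3]
    have hf := (hfix x).mp h.symm
    have hl : lam x = (lam x - 1) + 1 := by have := hpos x; omega
    rw [hl, pow_succ] at hf
    have he2 : ε * ε = 1 := eps_sq ε hε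
    calc (-1 : ℂ) ^ (lam x - 1) = (ε * ε) * (-1) ^ (lam x - 1) := by rw [he2, one_mul]
      _ = ε * -(ε * ((-1) ^ (lam x - 1) * (-1))) := by ring
      _ = ε * -(-1) := by rw [hf]
      _ = ε := by ring
  · rw [if_neg (not_le.mpr h), if_pos h.le]
    have hsq : (-1 : ℂ) ^ (lam x - 1 - (u : ℕ)) * (-1 : ℂ) ^ (lam x - 1 - (u : ℕ)) = 1 := by
      rw [← mul_pow]; norm_num
    linear_combination ε * hsq


include hpr hlampr hπ1 hπ2 in
lemma pi_eq_iff {a b : Box lam} : π a = b ↔ a = π b := by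
  constructor
  · rintro rfl; exact (pi_invol pr π hpr hlampr hπ1 hπ2 a).symm
  · rintro rfl; exact pi_invol pr π hpr hlampr hπ1 hπ2 b

lemma sum_std_diag : ∑ a : Box lam, Matrix.single a a (1 : ℂ) = 1 := by
  ext p q
  rw [Matrix.sum_apply]
  by_cases h : p = q
  · subst h
    rw [Fintype.sum_eq_single p (fun b hb => by
      apply Matrix.single_apply_of_ne
      rintro ⟨rfl, -⟩; exact hb rfl)]
    simp [Matrix.one_apply]
  · rw [Finset.sum_eq_zero (fun a _ => by
      apply Matrix.single_apply_of_ne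
      rintro ⟨rfl, rfl⟩; exact h rfl)]
    simp [Matrix.one_apply, h]

include hpr hlampr hπ1 hπ2 hpos hε hfix in
lemma J_mul_J : Jmat pr ε π * Jmat pr ε π = ε • (1 : Matrix (Box lam) (Box lam) ℂ) := by
  have hinv := pi_invol pr π hpr hlampr hπ1 hπ2
  unfold Jmat
  rw [Finset.sum_mul]
  have key : ∀ a : Box lam,
      (eta lam pr ε a.1 (a.2 : ℕ) • Matrix.single a (π a) (1 : ℂ)) *
        (∑ b : Box lam, eta lam pr ε b.1 (b.2 : ℕ) • Matrix.single b (π b) (1 : ℂ)) =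
      ε • Matrix.single a a (1 : ℂ) := by
    intro a
    rw [Finset.mul_sum, Fintype.sum_eq_single (π a)]
    · rw [smul_mul_assoc, Matrix.mul_smul, Matrix.single_mul_single_same, one_mul, hinv a,
        smul_smul, et_def, et_def, et_pi pr ε π hpr hlampr hπ1 hπ2 hpos hε hfix a]
    · intro b hb
      have h0 : Matrix.single a (π a) (1 : ℂ) * Matrix.single b (π b) (1 : ℂ) = 0 :=
        by rw [Matrix.single_mul_single_of_ne]; exact fun h => hb h.symm
      rw [smul_mul_assoc, Matrix.mul_smul, h0, smul_zero, smul_zero]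
  rw [Finset.sum_congr rfl (fun a _ => key a), ← Finset.smul_sum, sum_std_diag]

include hpr hlampr hπ1 hπ2 hpos hε hfix in
lemma Jmat_inv : (Jmat pr ε π)⁻¹ = ε • Jmat pr ε π := by
  apply Matrix.inv_eq_right_inv
  rw [Matrix.mul_smul, J_mul_J pr ε π hpr hlampr hπ1 hπ2 hpos hε hfix, smul_smul,
    eps_sq ε hε, one_smul]

lemma eMat_transpose (a b : Box lam) : (eMat a b)ᵀ = Matrix.single a b (1 : ℂ) := by
  ext p q
  simp only [eMat, Matrix.transpose_apply, Matrix.single, Matrix.of_apply]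
  exact if_congr and_comm rfl rfl

include hpr hlampr hπ1 hπ2 in
lemma J_mul_std (a b : Box lam) :
    Jmat pr ε π * Matrix.single a b (1 : ℂ) =
      et lam pr ε (π a) • Matrix.single (π a) b (1 : ℂ) := by
  have hinv := pi_invol pr π hpr hlampr hπ1 hπ2
  unfold Jmat
  rw [Finset.sum_mul, Fintype.sum_eq_single (π a)]
  · rw [smul_mul_assoc, hinv a, Matrix.single_mul_single_same, one_mul, et_def]
  · intro c hc
    rw [smul_mul_assoc, Matrix.single_mul_single_of_ne, smul_zero]
    intro h
    exact hc (((pi_eq_iff pr π hpr hlampr hπ1 hπ2).mp h).symm ▸ rfl)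

lemma std_mul_J (a b : Box lam) :
    Matrix.single a b (1 : ℂ) * Jmat pr ε π =
      et lam pr ε b • Matrix.single a (π b) (1 : ℂ) := by
  unfold Jmat
  rw [Finset.mul_sum, Fintype.sum_eq_single b]
  · rw [Matrix.mul_smul, Matrix.single_mul_single_same, one_mul, et_def]
  · intro c hc
    have h0 : Matrix.single a b (1 : ℂ) * Matrix.single c (π c) (1 : ℂ) = 0 :=
      by rw [Matrix.single_mul_single_of_ne]; exact fun h => hc h.symm
    rw [Matrix.mul_smul, h0, smul_zero]

include hpr hlampr hπ1 hπ2 hpos hε hfix in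
lemma sigma_eMat (a b : Box lam) :
    sigmaM pr ε π (eMat a b) =
      (-(ε * et lam pr ε (π a) * et lam pr ε b)) • eMat (π b) (π a) := by
  unfold sigmaM
  rw [Jmat_inv pr ε π hpr hlampr hπ1 hπ2 hpos hε hfix, eMat_transpose,
    smul_mul_assoc, smul_mul_assoc, J_mul_std pr ε π hpr hlampr hπ1 hπ2,
    smul_mul_assoc, std_mul_J, smul_smul, smul_smul, ← neg_smul]
  show _ = (-(ε * et lam pr ε (π a) * et lam pr ε b)) • Matrix.single (π a) (π b) (1:ℂ)
  congr 1

/-- The index condition appearing in `zetaZ`. -/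
def condZ (lam : Fin n → ℕ) (i j : Fin n) (t : ℤ) (a b : Box lam) : Prop :=
  a.1 = i ∧ b.1 = j ∧ ((a.2 : ℕ) : ℤ) ≤ t ∧
    ((b.2 : ℕ) : ℤ) = ((a.2 : ℕ) : ℤ) + ((lam j : ℤ) - 1 - t)

instance (lam : Fin n → ℕ) (i j : Fin n) (t : ℤ) (a b : Box lam) :
    Decidable (condZ lam i j t a b) := by unfold condZ; infer_instance

/-- The elementary part of `zetaZ`. -/
noncomputable def Spart (pr : Fin n → Fin n) (ε : ℂ) (π : Box lam ≃ Box lam)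
    (i j : Fin n) (t : ℤ) : Matrix (Box lam) (Box lam) ℂ :=
  ∑ a : Box lam, ∑ b : Box lam, if condZ lam i j t a b then eMat a b else 0

/-- The `σ`-part of `zetaZ`. -/
noncomputable def Tpart (pr : Fin n → Fin n) (ε : ℂ) (π : Box lam ≃ Box lam)
    (i j : Fin n) (t : ℤ) : Matrix (Box lam) (Box lam) ℂ :=
  ∑ a : Box lam, ∑ b : Box lam, if condZ lam i j t a b then
    (-(ε * et lam pr ε (π a) * et lam pr ε b)) • eMat (π b) (π a) else 0

include hpr hlampr hπ1 hπ2 hpos hε hfix in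
lemma zeta_decomp (i j : Fin n) (t : ℤ) :
    zetaZ pr ε π i j t = Spart pr ε π i j t + Tpart pr ε π i j t := by
  unfold zetaZ Spart Tpart condZ
  rw [← Finset.sum_add_distrib]
  refine Finset.sum_congr rfl fun a _ => ?_
  rw [← Finset.sum_add_distrib]
  refine Finset.sum_congr rfl fun b _ => ?_
  split_ifs with h
  · unfold fEl
    rw [sigma_eMat pr ε π hpr hlampr hπ1 hπ2 hpos hε hfix]
    simp [h]
  · simp [h]

lemma Spart_apply (i j : Fin n) (t : ℤ) (p q : Box lam) :
    Spart pr ε π i j t p q = if condZ lam i j t q p then 1 else 0 := by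
  unfold Spart
  simp only [Matrix.sum_apply]
  rw [Fintype.sum_eq_single q (fun a ha => ?_)]
  · rw [Fintype.sum_eq_single p (fun b hb => ?_)]
    · split_ifs with h
      · exact Matrix.single_apply_same p q 1
      · rfl
    · rw [apply_ite (fun M : Matrix (Box lam) (Box lam) ℂ => M p q), Matrix.zero_apply]
      split_ifs with h
      · exact Matrix.single_apply_of_row_ne hb q q 1
      · rfl
  · rw [Finset.sum_eq_zero]
    intro b _
    rw [apply_ite (fun M : Matrix (Box lam) (Box lam) ℂ => M p q), Matrix.zero_apply]
    split_ifs with h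
    · exact Matrix.single_apply_of_col_ne b p ha 1
    · rfl

include hpr hlampr hπ1 hπ2 in
lemma Tpart_apply (i j : Fin n) (t : ℤ) (p q : Box lam) :
    Tpart pr ε π i j t p q = if condZ lam i j t (π p) (π q) then
      -(ε * et lam pr ε p * et lam pr ε (π q)) else 0 := by
  have hinv := pi_invol pr π hpr hlampr hπ1 hπ2
  have hpinj : Function.Injective π := π.injective
  unfold Tpart
  simp only [Matrix.sum_apply]
  rw [Fintype.sum_eq_single (π p) (fun a ha => ?_)]
  · rw [Fintype.sum_eq_single (π q) (fun b hb => ?_)]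
    · rw [apply_ite (fun M : Matrix (Box lam) (Box lam) ℂ => M p q), Matrix.zero_apply]
      split_ifs with h
      · rw [Matrix.smul_apply, hinv p, hinv q]
        show _ • (Matrix.single p q 1) p q = _
        rw [Matrix.single_apply_same, smul_eq_mul, mul_one]
      · rfl
    · rw [apply_ite (fun M : Matrix (Box lam) (Box lam) ℂ => M p q), Matrix.zero_apply]
      split_ifs with h
      · rw [Matrix.smul_apply]
        show _ • (Matrix.single (π (π p)) (π b) 1) p q = _
        rw [Matrix.single_apply_of_col_ne _ _ (fun hc => hb (hpinj (hc.trans (hinv q).symm))),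
          smul_zero]
      · rfl
  · rw [Finset.sum_eq_zero]
    intro b _
    rw [apply_ite (fun M : Matrix (Box lam) (Box lam) ℂ => M p q), Matrix.zero_apply]
    split_ifs with h
    · rw [Matrix.smul_apply]
      show _ • (Matrix.single (π a) (π b) 1) p q = _
      rw [Matrix.single_apply_of_row_ne (fun hc => ha (hpinj (hc.trans (hinv p).symm))),
        smul_zero]
    · rfl

lemma sum_mid {M : Type*} [AddCommMonoid M] (i k j : Fin n) (s t : ℤ)
    (hsk : s ≤ (lam k : ℤ) - 1) (htk : t ≤ (lam k : ℤ) - 1)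
    (c b : Box lam) (v : M) :
    (∑ m : Box lam, if condZ lam i k s c m ∧ condZ lam k j t m b then v else 0)
      = if condZ lam i j (s + t - ((lam k : ℤ) - 1)) c b then v else 0 := by
  by_cases H : condZ lam i j (s + t - ((lam k : ℤ) - 1)) c b
  · obtain ⟨h1, h2, h3, h4⟩ := H
    have hc2 : (0 : ℤ) ≤ ((c.2 : ℕ) : ℤ) := Int.natCast_nonneg _
    have hw0 : (0 : ℤ) ≤ ((c.2 : ℕ) : ℤ) + ((lam k : ℤ) - 1 - s) := by omega
    have hwlt : (((c.2 : ℕ) : ℤ) + ((lam k : ℤ) - 1 - s)).toNat < lam k := by omega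
    set m0 : Box lam := ⟨k, ⟨(((c.2 : ℕ) : ℤ) + ((lam k : ℤ) - 1 - s)).toNat, hwlt⟩⟩ with hm0
    have hm0v : ((m0.2 : ℕ) : ℤ) = ((c.2 : ℕ) : ℤ) + ((lam k : ℤ) - 1 - s) := by
      rw [hm0]; exact Int.toNat_of_nonneg hw0
    rw [Fintype.sum_eq_single m0 (fun m hm => ?_)]
    · rw [if_pos, if_pos ⟨h1, h2, h3, h4⟩]
      refine ⟨⟨h1, rfl, by omega, by omega⟩, ⟨rfl, h2, by omega, by omega⟩⟩
    · rw [if_neg]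
      rintro ⟨⟨-, hmk, -, hm4⟩, -⟩
      exact hm (box_ext hmk (by omega))
  · rw [if_neg H, Finset.sum_eq_zero]
    intro m _
    rw [if_neg]
    rintro ⟨⟨g1, g2, g3, g4⟩, ⟨g5, g6, g7, g8⟩⟩
    exact H ⟨g1, g6, by omega, by omega⟩

lemma mul_support_zero {M N : Matrix (Box lam) (Box lam) ℂ} {cM cN : ℕ}
    (hM : ∀ p q, M p q ≠ 0 → lam q.1 = cM) (hN : ∀ p q, N p q ≠ 0 → lam p.1 = cN)
    (hne : cM ≠ cN) : M * N = 0 := by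
  ext p q
  rw [Matrix.mul_apply, Matrix.zero_apply]
  apply Finset.sum_eq_zero
  intro r _
  by_cases h : M p r = 0
  · rw [h, zero_mul]
  · by_cases h2 : N r q = 0
    · rw [h2, mul_zero]
    · exact absurd ((hM p r h).symm.trans (hN r q h2)) hne

lemma Spart_col (i j : Fin n) (t : ℤ) (p q : Box lam) (h : lam q.1 ≠ lam i) :
    Spart pr ε π i j t p q = 0 := by
  rw [Spart_apply, if_neg]
  rintro ⟨h1, -, -⟩
  exact h (by rw [h1])

lemma Spart_row (i j : Fin n) (t : ℤ) (p q : Box lam) (h : lam p.1 ≠ lam j) :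
    Spart pr ε π i j t p q = 0 := by
  rw [Spart_apply, if_neg]
  rintro ⟨-, h2, -⟩
  exact h (by rw [h2])

include hpr hlampr hπ1 hπ2 in
lemma Tpart_col (i j : Fin n) (t : ℤ) (p q : Box lam) (h : lam q.1 ≠ lam j) :
    Tpart pr ε π i j t p q = 0 := by
  rw [Tpart_apply pr ε π hpr hlampr hπ1 hπ2, if_neg]
  rintro ⟨-, h2, -⟩
  exact h (by rw [← h2, hπ1 q, hlampr])

include hpr hlampr hπ1 hπ2 in
lemma Tpart_row (i j : Fin n) (t : ℤ) (p q : Box lam) (h : lam p.1 ≠ lam i) :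
    Tpart pr ε π i j t p q = 0 := by
  rw [Tpart_apply pr ε π hpr hlampr hπ1 hπ2, if_neg]
  rintro ⟨h1, -⟩
  exact h (by rw [← h1, hπ1 p, hlampr])

lemma Spart_mul_Spart (i k j : Fin n) (s t : ℤ)
    (hsk : s ≤ (lam k : ℤ) - 1) (htk : t ≤ (lam k : ℤ) - 1) :
    Spart pr ε π k j t * Spart pr ε π i k s
      = Spart pr ε π i j (s + t - ((lam k : ℤ) - 1)) := by
  ext p q
  rw [Matrix.mul_apply]
  simp only [Spart_apply]
  have key : ∀ r : Box lam,
      (if condZ lam k j t r p then (1 : ℂ) else 0) * (if condZ lam i k s q r then (1 : ℂ) else 0)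
        = if condZ lam i k s q r ∧ condZ lam k j t r p then (1 : ℂ) else 0 := by
    intro r
    split_ifs with h1 h2 h3 <;> first | (exfalso; tauto) | ring
  simp only [key]
  rw [sum_mid i k j s t hsk htk q p 1]

include hpr hlampr hπ1 hπ2 hpos hε hfix in
lemma Tpart_mul_Tpart (i k j : Fin n) (s t : ℤ)
    (hsk : s ≤ (lam k : ℤ) - 1) (htk : t ≤ (lam k : ℤ) - 1) :
    Tpart pr ε π i k s * Tpart pr ε π k j t
      = -Tpart pr ε π i j (s + t - ((lam k : ℤ) - 1)) := by
  have hinv := pi_invol pr π hpr hlampr hπ1 hπ2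
  have hpi := et_pi pr ε π hpr hlampr hπ1 hπ2 hpos hε hfix
  have he2 := eps_sq ε hε
  ext p q
  rw [Matrix.mul_apply]
  simp only [Tpart_apply pr ε π hpr hlampr hπ1 hπ2]
  rw [← Equiv.sum_comp π (fun r => (if condZ lam i k s (π p) (π r) then
      -(ε * et lam pr ε p * et lam pr ε (π r)) else 0) *
    (if condZ lam k j t (π r) (π q) then -(ε * et lam pr ε r * et lam pr ε (π q)) else 0))]
  simp only [hinv]
  have key : ∀ m : Box lam,
      (if condZ lam i k s (π p) m then -(ε * et lam pr ε p * et lam pr ε m) else 0) *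
        (if condZ lam k j t m (π q) then -(ε * et lam pr ε (π m) * et lam pr ε (π q)) else 0)
      = if condZ lam i k s (π p) m ∧ condZ lam k j t m (π q) then
          ε * (et lam pr ε p * et lam pr ε (π q)) else 0 := by
    intro m
    split_ifs with h1 h2 h3 <;> first
      | (exfalso; tauto)
      | (have h := hpi m; linear_combination (ε * ε * et lam pr ε p * et lam pr ε (π q)) * h
          + (ε * et lam pr ε p * et lam pr ε (π q)) * he2)
      | ring
  simp only [key]
  rw [sum_mid i k j s t hsk htk (π p) (π q) (ε * (et lam pr ε p * et lam pr ε (π q)))]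
  rw [Matrix.neg_apply, Tpart_apply pr ε π hpr hlampr hπ1 hπ2]
  split_ifs with h <;> ring

end Aux

/-- For `λ_i < λ_k < λ_j`, `0 ≤ s < λ_i`, `0 ≤ t < λ_k`:
`[ζ_i^{k,s}, ζ_k^{j,t}] = −ζ_i^{j, s + t − (λ_k − 1)}`. -/
theorem zeta_bracket_zeta
    (n : ℕ) (lam : Fin n → ℕ) (hlam : Antitone lam) (hpos : ∀ i, 0 < lam i)
    (ε : ℂ) (hε : ε = 1 ∨ ε = -1)
    (pr : Fin n → Fin n) (hpr : ∀ i, pr (pr i) = i)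
    (hlampr : ∀ i, lam (pr i) = lam i)
    (hfix : ∀ i, pr i = i ↔ ε * (-1 : ℂ) ^ (lam i) = -1)
    (π : Box lam ≃ Box lam)
    (hπ1 : ∀ a : Box lam, (π a).1 = pr a.1)
    (hπ2 : ∀ a : Box lam, ((π a).2 : ℕ) = lam a.1 - 1 - (a.2 : ℕ))
    (i j k : Fin n) (hik : lam i < lam k) (hkj : lam k < lam j)
    (s t : ℕ) (hs : s < lam i) (ht : t < lam k) :
    ⁅zetaZ pr ε π i k (s : ℤ), zetaZ pr ε π k j (t : ℤ)⁆ =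
      -zetaZ pr ε π i j ((s : ℤ) + t - ((lam k : ℤ) - 1)) := by
  have hd : ∀ (x y : Fin n) (u : ℤ),
      zetaZ pr ε π x y u = Spart pr ε π x y u + Tpart pr ε π x y u :=
    fun x y u => zeta_decomp pr ε π hpr hlampr hπ1 hπ2 hpos hε hfix x y u
  have hScol : ∀ (x y : Fin n) (u : ℤ) (p q : Box lam),
      Spart pr ε π x y u p q ≠ 0 → lam q.1 = lam x :=
    fun x y u p q h => by_contra fun hne => h (Spart_col pr ε π x y u p q hne)
  have hSrow : ∀ (x y : Fin n) (u : ℤ) (p q : Box lam),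
      Spart pr ε π x y u p q ≠ 0 → lam p.1 = lam y :=
    fun x y u p q h => by_contra fun hne => h (Spart_row pr ε π x y u p q hne)
  have hTcol : ∀ (x y : Fin n) (u : ℤ) (p q : Box lam),
      Tpart pr ε π x y u p q ≠ 0 → lam q.1 = lam y :=
    fun x y u p q h => by_contra fun hne =>
      h (Tpart_col pr ε π hpr hlampr hπ1 hπ2 x y u p q hne)
  have hTrow : ∀ (x y : Fin n) (u : ℤ) (p q : Box lam),
      Tpart pr ε π x y u p q ≠ 0 → lam p.1 = lam x :=
    fun x y u p q h => by_contra fun hne =>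
      h (Tpart_row pr ε π hpr hlampr hπ1 hπ2 x y u p q hne)
  have hik' : lam i ≠ lam k := ne_of_lt hik
  have hkj' : lam k ≠ lam j := ne_of_lt hkj
  have hij' : lam i ≠ lam j := ne_of_lt (hik.trans hkj)
  have hsk : (s : ℤ) ≤ (lam k : ℤ) - 1 := by
    have : s < lam k := lt_trans hs hik
    omega
  have htk : (t : ℤ) ≤ (lam k : ℤ) - 1 := by omega
  have hz1 : Spart pr ε π i k (s : ℤ) * Spart pr ε π k j (t : ℤ) = 0 :=
    mul_support_zero (hScol i k _) (hSrow k j _) hij'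
  have hz2 : Spart pr ε π i k (s : ℤ) * Tpart pr ε π k j (t : ℤ) = 0 :=
    mul_support_zero (hScol i k _) (hTrow k j _) hik'
  have hz3 : Tpart pr ε π i k (s : ℤ) * Spart pr ε π k j (t : ℤ) = 0 :=
    mul_support_zero (hTcol i k _) (hSrow k j _) hkj'
  have hz4 : Spart pr ε π k j (t : ℤ) * Tpart pr ε π i k (s : ℤ) = 0 :=
    mul_support_zero (hScol k j _) (hTrow i k _) (Ne.symm hik')
  have hz5 : Tpart pr ε π k j (t : ℤ) * Spart pr ε π i k (s : ℤ) = 0 :=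
    mul_support_zero (hTcol k j _) (hSrow i k _) (Ne.symm hkj')
  have hz6 : Tpart pr ε π k j (t : ℤ) * Tpart pr ε π i k (s : ℤ) = 0 :=
    mul_support_zero (hTcol k j _) (hTrow i k _) (Ne.symm hij')
  have he1 : Spart pr ε π k j (t : ℤ) * Spart pr ε π i k (s : ℤ)
      = Spart pr ε π i j ((s : ℤ) + t - ((lam k : ℤ) - 1)) :=
    Spart_mul_Spart pr ε π i k j (s : ℤ) (t : ℤ) hsk htk
  have he2 : Tpart pr ε π i k (s : ℤ) * Tpart pr ε π k j (t : ℤ)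
      = -Tpart pr ε π i j ((s : ℤ) + t - ((lam k : ℤ) - 1)) :=
    Tpart_mul_Tpart pr ε π hpr hlampr hπ1 hπ2 hpos hε hfix i k j (s : ℤ) (t : ℤ) hsk htk
  rw [Ring.lie_def, hd i k (s : ℤ), hd k j (t : ℤ),
    hd i j ((s : ℤ) + t - ((lam k : ℤ) - 1))]
  simp only [add_mul, mul_add]
  rw [hz1, hz2, hz3, hz4, hz5, hz6, he1, he2]
  abel
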